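/- Fix a positive integer k and a real number ε > 0. Let w_k = [x_1, …, x_k] be the left-normed commutator word. Let G be a finite group and suppose that for some g ∈ G we have P_{G,w_k}(g) ≥ ε. Set n = ⌊k/ε⌋ and let N = G(S_n) be the intersection of the kernels of all homomorphisms from G to the symmetric group S_n. Then N is nilpotent of class less than k, i.e., γ_k(N) = 1. -/

import Mathlib

open scoped Classical

/-- The commutator `[x, y] = x⁻¹y⁻¹xy` (the convention used in the paper). -/
def pcomm {G : Type*} [Group G] (x y : G) : G := x⁻¹ * y⁻¹ * x * y

/-- The left-normed commutator word `w_k = [x₁, …, x_k] ∈ F_k`,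
defined inductively by `w₁ = x₁` and `w_{j+1} = [w_j, x_{j+1}]`. -/
def commWord : (k : ℕ) → FreeGroup (Fin k)
  | 0 => 1
  | 1 => FreeGroup.of 0
  | (k + 2) =>
      pcomm (FreeGroup.map Fin.castSucc (commWord (k + 1))) (FreeGroup.of (Fin.last (k + 1)))

/-- The left-normed commutator `[g₁, …, g_k]` of group elements. -/
def commElt {G : Type*} [Group G] : {k : ℕ} → (Fin k → G) → G
  | 0, _ => 1
  | 1, f => f 0
  | (_ + 2), f => pcomm (commElt (fun i => f i.castSucc)) (f (Fin.last _))

/-- The word `[x₁², x₂, …, x_k] ∈ F_k`, defined inductively by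
`u₁ = x₁²` and `u_{j+1} = [u_j, x_{j+1}]`. -/
def sqCommWord : (k : ℕ) → FreeGroup (Fin k)
  | 0 => 1
  | 1 => FreeGroup.of 0 ^ 2
  | (k + 2) =>
      pcomm (FreeGroup.map Fin.castSucc (sqCommWord (k + 1))) (FreeGroup.of (Fin.last (k + 1)))

/-- `P_{G,w}(g) = |w_G⁻¹(g)| / |G|^k`, the probability that the word map of `w`
takes the value `g` on a uniformly random `k`-tuple. -/
noncomputable def wordProb {k : ℕ} {G : Type*} [Group G] (w : FreeGroup (Fin k)) (g : G) : ℝ :=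
  (Nat.card {f : Fin k → G // FreeGroup.lift f w = g} : ℝ) / (Nat.card G : ℝ) ^ k

/-- A group is residually finite if every nontrivial element is excluded by
some normal subgroup of finite index. -/
def ResiduallyFinite (Γ : Type*) [Group Γ] : Prop :=
  ∀ g : Γ, g ≠ 1 → ∃ Δ : Subgroup Γ, Δ.Normal ∧ Δ.FiniteIndex ∧ g ∉ Δ

/-- A word `w ≠ 1` is a probabilistic identity of `Γ` if for some `ε > 0` every
finite quotient `H` of `Γ` satisfies `P_{H,w}(1) ≥ ε`. -/
def IsProbIdentity {k : ℕ} (Γ : Type*) [Group Γ] (w : FreeGroup (Fin k)) : Prop :=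
  w ≠ 1 ∧ ∃ ε : ℝ, 0 < ε ∧
    ∀ (Δ : Subgroup Γ) [Δ.Normal], Δ.FiniteIndex → ε ≤ wordProb w (1 : Γ ⧸ Δ)

/-- `G(H)`: the intersection of the kernels of all homomorphisms from `G` to `H`. -/
def kerInt (G H : Type*) [Group G] [Group H] : Subgroup G := ⨅ φ : G →* H, φ.ker

/-- A word `1 ≠ w ∈ F_k` is good if for every `ε > 0` there is a word `1 ≠ v ∈ F_m`,
depending only on `w` and `ε`, which is an identity of every finite group `G`
satisfying `P_{G,w}(g) ≥ ε` for some `g ∈ G`. -/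
def IsGood {k : ℕ} (w : FreeGroup (Fin k)) : Prop :=
  w ≠ 1 ∧ ∀ ε : ℝ, 0 < ε → ∃ (m : ℕ) (v : FreeGroup (Fin m)), v ≠ 1 ∧
    ∀ (G : Type) [Group G] [Finite G],
      (∃ g : G, ε ≤ wordProb w g) → ∀ f : Fin m → G, FreeGroup.lift f v = 1

lemma commElt_succ_succ {G : Type*} [Group G] {m : ℕ} (f : Fin (m + 2) → G) :
    commElt f = pcomm (commElt (fun i => f i.castSucc)) (f (Fin.last _)) := rfl

lemma map_commElt {G H : Type*} [Group G] [Group H] (φ : G →* H) :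
    ∀ {k : ℕ} (f : Fin k → G), φ (commElt f) = commElt (φ ∘ f)
  | 0, f => by simp [commElt]
  | 1, f => rfl
  | (k + 2), f => by
      have ih := map_commElt φ (fun i => f i.castSucc)
      simp only [commElt_succ_succ, pcomm, map_mul, map_inv, ih]
      rfl

lemma lift_commWord {G : Type*} [Group G] :
    ∀ (k : ℕ) (f : Fin k → G), FreeGroup.lift f (commWord k) = commElt f
  | 0, f => by simp [commWord, commElt]
  | 1, f => by simp [commWord, commElt]
  | (k + 2), f => by
      have hmap : (FreeGroup.lift f).comp (FreeGroup.map Fin.castSucc)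
          = FreeGroup.lift (fun i => f i.castSucc) := by
        ext i
        simp
      have ih := lift_commWord (k + 1) (fun i => f i.castSucc)
      simp only [commWord, commElt_succ_succ, pcomm, map_mul, map_inv, FreeGroup.lift_apply_of]
      rw [← MonoidHom.comp_apply, hmap, ih]

lemma card_pcomm_fiber_le {G : Type*} [Group G] [Finite G] (u g : G) :
    Nat.card {t : G // pcomm u t = g} ≤ Nat.card (MulAction.stabilizer (ConjAct G) u) := by
  rcases isEmpty_or_nonempty {t : G // pcomm u t = g} with hE | ⟨⟨t₀, ht₀⟩⟩
  · simp [Nat.card_of_isEmpty]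
  · have key : ∀ t : {t : G // pcomm u t = g},
        ConjAct.toConjAct (t₀ * (t : G)⁻¹) ∈ MulAction.stabilizer (ConjAct G) u := by
      rintro ⟨t, ht⟩
      have h1 : (t : G)⁻¹ * u * t = t₀⁻¹ * u * t₀ := by
        have := ht.trans ht₀.symm
        unfold pcomm at this
        have h2 : u * (u⁻¹ * t⁻¹ * u * t) = u * (u⁻¹ * t₀⁻¹ * u * t₀) := by rw [this]
        calc t⁻¹ * u * t = u * (u⁻¹ * t⁻¹ * u * t) := by group
        _ = u * (u⁻¹ * t₀⁻¹ * u * t₀) := h2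
        _ = t₀⁻¹ * u * t₀ := by group
      have hc : (t₀ * t⁻¹) * u * (t₀ * t⁻¹)⁻¹ = u := by
        calc (t₀ * t⁻¹) * u * (t₀ * t⁻¹)⁻¹ = t₀ * (t⁻¹ * u * t) * t₀⁻¹ := by group
        _ = t₀ * (t₀⁻¹ * u * t₀) * t₀⁻¹ := by rw [h1]
        _ = u := by group
      rw [MulAction.mem_stabilizer_iff, ConjAct.toConjAct_smul]
      exact hc
    letI : Finite (ConjAct G) := ‹Finite G›
    have hinj : Function.Injective
        (fun t : {t : G // pcomm u t = g} =>
          (⟨ConjAct.toConjAct (t₀ * (t : G)⁻¹), key t⟩ :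
            MulAction.stabilizer (ConjAct G) u)) := by
      rintro ⟨t, ht⟩ ⟨t', ht'⟩ hst
      simp only [Subtype.mk.injEq] at hst ⊢
      have := ConjAct.toConjAct.injective hst
      exact inv_injective (mul_left_cancel this)
    exact Nat.card_le_card_of_injective _ hinj

lemma kerInt_le_ker {G H : Type*} [Group G] [Group H] (ψ : G →* H) :
    kerInt G H ≤ ψ.ker := iInf_le _ ψ

lemma kerInt_eq_bot_of_card_le {G : Type*} [Group G] [Finite G] {n : ℕ}
    (h : Nat.card G ≤ n) : kerInt G (Equiv.Perm (Fin n)) = ⊥ := by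
  classical
  letI : Fintype G := Fintype.ofFinite G
  obtain ⟨e⟩ : Nonempty (G ↪ Fin n) := by
    rw [Function.Embedding.nonempty_iff_card_le]
    have : Fintype.card G ≤ Fintype.card (Fin n) := by
      rw [Fintype.card_fin, ← Nat.card_eq_fintype_card]; exact h
    exact this
  set ψ : G →* Equiv.Perm (Fin n) :=
    (Equiv.Perm.viaEmbeddingHom e).comp (MulAction.toPermHom G G) with hψ
  have hinj : Function.Injective ψ := by
    apply (Equiv.Perm.viaEmbeddingHom_injective e).comp
    intro a b hab
    have := Equiv.Perm.ext_iff.mp hab (1 : G)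
    simpa using this
  rw [eq_bot_iff]
  intro a ha
  have : ψ a = 1 := iInf_le (fun φ : G →* Equiv.Perm (Fin n) => φ.ker) ψ ha
  simpa [Subgroup.mem_bot] using hinj (this.trans (map_one ψ).symm)

-- kerInt is normal
instance kerInt_normal {G H : Type*} [Group G] [Group H] : (kerInt G H).Normal := by
  constructor
  intro x hx g
  rw [kerInt, Subgroup.mem_iInf] at hx ⊢
  intro φ
  have hxφ : φ x = 1 := hx φ
  simp [MonoidHom.mem_ker, map_mul, map_inv, hxφ]


-- small orbit => centralized by kerInt G (Perm (Fin n))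
lemma centralized_of_small_class {G : Type*} [Group G] [Finite G] (n : ℕ) (u : G)
    (h : Nat.card G ≤ n * Nat.card (MulAction.stabilizer (ConjAct G) u))
    {a : G} (ha : a ∈ kerInt G (Equiv.Perm (Fin n))) : a * u = u * a := by
  classical
  letI : Fintype G := Fintype.ofFinite G
  letI : Fintype (ConjAct G) := ‹Fintype G›
  have horb : Fintype.card (MulAction.orbit (ConjAct G) u) ≤ n := by
    have hos := MulAction.card_orbit_mul_card_stabilizer_eq_card_group (ConjAct G) u
    have hstabpos : 0 < Fintype.card (MulAction.stabilizer (ConjAct G) u) :=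
      Fintype.card_pos
    have hcards : Nat.card G = Fintype.card (ConjAct G) := Nat.card_eq_fintype_card
    have hstab : Nat.card (MulAction.stabilizer (ConjAct G) u)
        = Fintype.card (MulAction.stabilizer (ConjAct G) u) := Nat.card_eq_fintype_card
    rw [hcards, hstab] at h
    rw [← hos] at h
    exact Nat.le_of_mul_le_mul_right (by linarith [h]) hstabpos
  -- embedding of the orbit into Fin n
  obtain ⟨e⟩ : Nonempty (MulAction.orbit (ConjAct G) u ↪ Fin n) := by
    rw [Function.Embedding.nonempty_iff_card_le]
    simpa using horb
  set φ : G →* Equiv.Perm (MulAction.orbit (ConjAct G) u) :=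
    (MulAction.toPermHom (ConjAct G) (MulAction.orbit (ConjAct G) u)).comp
      ConjAct.toConjAct.toMonoidHom with hφ
  have hψ : (Equiv.Perm.viaEmbeddingHom e).comp φ a = 1 :=
    kerInt_le_ker ((Equiv.Perm.viaEmbeddingHom e).comp φ) ha
  have hφa : φ a = 1 := by
    apply Equiv.Perm.viaEmbeddingHom_injective e
    simpa using hψ
  have := Equiv.Perm.ext_iff.mp (show (φ a : Equiv.Perm _) = 1 from hφa)
    ⟨u, MulAction.mem_orbit_self u⟩
  have h2 : ConjAct.toConjAct a • u = u := congrArg Subtype.val this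
  rw [ConjAct.toConjAct_smul] at h2
  calc a * u = (a * u * a⁻¹) * a := by group
  _ = u * a := by rw [h2]

lemma centralizer_normal {G : Type*} [Group G] (N : Subgroup G) [hN : N.Normal] :
    (Subgroup.centralizer (N : Set G)).Normal := by
  constructor
  intro x hx g
  rw [Subgroup.mem_centralizer_iff] at hx ⊢
  intro a ha
  have h1 : (g⁻¹ * a * g) * x = x * (g⁻¹ * a * g) := hx _ (hN.conj_mem' a ha g)
  calc a * (g * x * g⁻¹) = g * ((g⁻¹ * a * g) * x) * g⁻¹ := by group
  _ = g * (x * (g⁻¹ * a * g)) * g⁻¹ := by rw [h1]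
  _ = g * x * g⁻¹ * a := by group

universe u

lemma main : ∀ (m : ℕ) (G : Type u) [Group G] [Finite G] (ε : ℝ), 0 < ε →
    ∀ (g : G), ε ≤ wordProb (commWord (m + 1)) g →
    ∀ n : ℕ, n = Nat.floor (((m + 1 : ℕ) : ℝ) / ε) →
    Subgroup.lowerCentralSeries (⊤ : Subgroup ↥(kerInt G (Equiv.Perm (Fin n)))) m = ⊥ := by
  intro m
  induction m with
  | zero =>
    intro G _ _ ε hε g h n hn
    haveI : Unique {f : Fin 1 → G // FreeGroup.lift f (commWord 1) = g} := by
      refine ⟨⟨⟨fun _ => g, by simp [commWord]⟩⟩, ?_⟩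
      rintro ⟨f, hf⟩
      apply Subtype.ext
      funext i
      have hi : i = 0 := Subsingleton.elim i 0
      rw [hi]
      simpa [commWord] using hf
    have hcard : Nat.card {f : Fin 1 → G // FreeGroup.lift f (commWord 1) = g} = 1 :=
      Nat.card_unique
    have hGpos : (0 : ℝ) < (Nat.card G : ℝ) := by
      exact_mod_cast Nat.card_pos
    have hle : (Nat.card G : ℝ) ≤ ((1 : ℕ) : ℝ) / ε := by
      rw [wordProb, hcard] at h
      rw [le_div_iff₀ hε]
      have h2 : ε * (Nat.card G : ℝ) ^ (0 + 1) ≤ 1 := by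
        rw [le_div_iff₀ (by positivity)] at h
        exact_mod_cast h
      simp only [zero_add, pow_one] at h2
      push_cast
      linarith
    have hbot : kerInt G (Equiv.Perm (Fin n)) = ⊥ := by
      apply kerInt_eq_bot_of_card_le
      rw [hn]
      exact Nat.le_floor hle
    rw [Subgroup.lowerCentralSeries_zero, eq_bot_iff]
    intro x _
    have hiff := SetLike.ext_iff.mp hbot (x : G)
    have hx1 : (x : G) = 1 := Subgroup.mem_bot.mp (hiff.mp x.2)
    rw [Subgroup.mem_bot]
    exact Subtype.ext hx1
  | succ m ih =>
    intro G _ _ ε hε g h n hn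
    classical
    set N := kerInt G (Equiv.Perm (Fin n)) with hNdef
    haveI hNnorm : N.Normal := kerInt_normal
    set C := Subgroup.centralizer (N : Set G) with hCdef
    haveI hCnorm : C.Normal := centralizer_normal N
    haveI : Finite (G ⧸ C) := Quotient.finite _
    set π := QuotientGroup.mk' C with hπdef
    set ε' : ℝ := ε * (m + 1) / (m + 2) with hε'def
    have hε'pos : 0 < ε' := by positivity
    have harith : ((m + 1 : ℕ) : ℝ) / ε' = ((m + 1 + 1 : ℕ) : ℝ) / ε := by
      have hm1 : ((m : ℝ) + 1) ≠ 0 := by positivity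
      have hm2 : ((m : ℝ) + 2) ≠ 0 := by positivity
      rw [hε'def]
      push_cast
      field_simp
      ring
    have h' : ε' ≤ wordProb (commWord (m + 1)) (1 : G ⧸ C) := by
      letI : Fintype G := Fintype.ofFinite G
      letI : Fintype (G ⧸ C) := Fintype.ofFinite _
      letI : Finite (ConjAct G) := ‹Finite G›
      set cG := Nat.card G with hcGdef
      have hcGpos : 0 < cG := Nat.card_pos
      set P : (Fin (m + 1) → G) → Prop :=
        fun x => cG ≤ n * Nat.card (MulAction.stabilizer (ConjAct G) (commElt x)) with hPdef
      set Bs : Finset (Fin (m + 1) → G) := Finset.univ.filter P with hBsdef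
      set A := Nat.card {f : Fin (m + 2) → G // commElt f = g} with hAdef
      set F := Nat.card {f : Fin (m + 1) → G ⧸ C // commElt f = (1 : G ⧸ C)} with hFdef
      set cC := Nat.card C with hcCdef
      set cQ := Nat.card (G ⧸ C) with hcQdef
      have hcCpos : 0 < cC := Nat.card_pos
      have hcQpos : 0 < cQ := Nat.card_pos
      have hGQC : cG = cQ * cC := Subgroup.card_eq_card_quotient_mul_card_subgroup C
      have h1 : ε * (cG : ℝ) ^ (m + 2) ≤ (A : ℝ) := by
        have hAeq : Nat.card {f : Fin (m + 2) → G // FreeGroup.lift f (commWord (m + 2)) = g}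
            = A := Nat.card_congr (Equiv.subtypeEquivRight (fun f => by rw [lift_commWord]))
        simp only [wordProb] at h
        rw [show m + 1 + 1 = m + 2 from rfl] at h
        rw [hAeq] at h
        rw [← le_div_iff₀ (by positivity)]
        exact h
      have h2 : (n + 1) * A ≤ (n + 1) * (Bs.card * cG) + cG ^ (m + 2) := by
        set c : (Fin (m + 1) → G) → ℕ :=
          fun x => Nat.card {t : G // pcomm (commElt x) t = g} with hcdef
        have hA1 : A ≤ ∑ x : Fin (m + 1) → G, c x := by
          have hinj : Function.Injective
              (fun F : {f : Fin (m + 2) → G // commElt f = g} =>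
                (⟨fun i => F.1 i.castSucc,
                  ⟨F.1 (Fin.last (m + 1)), by rw [← commElt_succ_succ]; exact F.2⟩⟩ :
                  Σ x : Fin (m + 1) → G, {t : G // pcomm (commElt x) t = g})) := by
            rintro ⟨f, hf⟩ ⟨f', hf'⟩ heq
            simp only [Sigma.mk.inj_iff] at heq
            obtain ⟨heq1, heq2⟩ := heq
            have hval : f (Fin.last (m + 1)) = f' (Fin.last (m + 1)) := by
              have hco := (Subtype.heq_iff_coe_eq (fun t => by rw [heq1])).mp heq2
              exact hco
            apply Subtype.ext
            funext i
            refine Fin.lastCases ?_ ?_ i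
            · exact hval
            · intro j
              exact congrFun heq1 j
          calc A ≤ Nat.card (Σ x : Fin (m + 1) → G, {t : G // pcomm (commElt x) t = g}) :=
              Nat.card_le_card_of_injective _ hinj
          _ = ∑ x : Fin (m + 1) → G, c x := by
              rw [Nat.card_eq_fintype_card, Fintype.card_sigma]
              exact Finset.sum_congr rfl (fun x _ => Nat.card_eq_fintype_card.symm)
        have hpt : ∀ x : Fin (m + 1) → G, (n + 1) * c x ≤ if P x then (n + 1) * cG else cG := by
          intro x
          by_cases hx : P x
          · rw [if_pos hx]
            have hle : c x ≤ cG := Nat.card_le_card_of_injective _ Subtype.val_injective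
            exact Nat.mul_le_mul_left _ hle
          · rw [if_neg hx]
            have hcle : c x ≤ Nat.card (MulAction.stabilizer (ConjAct G) (commElt x)) :=
              card_pcomm_fiber_le _ _
            have hconj : Nat.card (ConjAct G) = cG := Nat.card_congr ConjAct.ofConjAct.toEquiv
            have hdvd : Nat.card (MulAction.stabilizer (ConjAct G) (commElt x)) ∣ cG := by
              rw [← hconj]
              exact Subgroup.card_subgroup_dvd_card _
            obtain ⟨q, hq⟩ := hdvd
            have hspos : 0 < Nat.card (MulAction.stabilizer (ConjAct G) (commElt x)) :=
              Nat.card_pos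
            have hnq : n < q := by
              by_contra hqn
              push_neg at hqn
              apply hx
              rw [hPdef]
              calc cG = Nat.card (MulAction.stabilizer (ConjAct G) (commElt x)) * q := hq
              _ ≤ Nat.card (MulAction.stabilizer (ConjAct G) (commElt x)) * n :=
                  Nat.mul_le_mul_left _ hqn
              _ = n * Nat.card (MulAction.stabilizer (ConjAct G) (commElt x)) := Nat.mul_comm _ _
            calc (n + 1) * c x ≤ (n + 1) * Nat.card (MulAction.stabilizer (ConjAct G) (commElt x)) :=
                Nat.mul_le_mul_left _ hcle
            _ ≤ q * Nat.card (MulAction.stabilizer (ConjAct G) (commElt x)) :=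
                Nat.mul_le_mul_right _ hnq
            _ = cG := by rw [hq, Nat.mul_comm]
        have hcard_univ : (Finset.univ : Finset (Fin (m + 1) → G)).card = cG ^ (m + 1) := by
          rw [Finset.card_univ, hcGdef, Nat.card_eq_fintype_card]
          rw [Fintype.card_fun, Fintype.card_fin]
        calc (n + 1) * A ≤ (n + 1) * ∑ x : Fin (m + 1) → G, c x := Nat.mul_le_mul_left _ hA1
        _ = ∑ x : Fin (m + 1) → G, (n + 1) * c x := by rw [Finset.mul_sum]
        _ ≤ ∑ x : Fin (m + 1) → G, (if P x then (n + 1) * cG else cG) :=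
            Finset.sum_le_sum (fun x _ => hpt x)
        _ = Bs.card * ((n + 1) * cG) + (Finset.univ.filter (fun x => ¬ P x)).card * cG := by
            rw [Finset.sum_ite, Finset.sum_const, Finset.sum_const, smul_eq_mul, smul_eq_mul,
              hBsdef]
        _ ≤ Bs.card * ((n + 1) * cG) + cG ^ (m + 1) * cG := by
            have hfle : (Finset.univ.filter (fun x => ¬ P x)).card ≤ cG ^ (m + 1) := by
              rw [← hcard_univ]
              exact Finset.card_filter_le _ _
            exact Nat.add_le_add_left (Nat.mul_le_mul_right _ hfle) _
        _ = (n + 1) * (Bs.card * cG) + cG ^ (m + 2) := by ring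
      have h3 : Bs.card ≤ F * cC ^ (m + 1) := by
        have hBsub : Bs.card = Nat.card {x : Fin (m + 1) → G // x ∈ Bs} := by
          rw [Nat.card_eq_fintype_card, Fintype.card_coe]
        have hprop : ∀ x : {x : Fin (m + 1) → G // x ∈ Bs}, commElt (π ∘ x.1) = (1 : G ⧸ C) := by
          intro x
          have hPx : P x.1 := (Finset.mem_filter.mp x.2).2
          have hu : commElt x.1 ∈ C := by
            rw [hCdef, Subgroup.mem_centralizer_iff]
            intro a ha
            exact centralized_of_small_class n (commElt x.1) hPx ha
          rw [← map_commElt]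
          rw [hπdef, QuotientGroup.mk'_apply, QuotientGroup.eq_one_iff]
          exact hu
        have hinj2 : Function.Injective (fun x : {x : Fin (m + 1) → G // x ∈ Bs} =>
            (⟨⟨π ∘ x.1, hprop x⟩, ⟨x.1, rfl⟩⟩ :
              Σ fq : {f : Fin (m + 1) → G ⧸ C // commElt f = (1 : G ⧸ C)},
                {y : Fin (m + 1) → G // π ∘ y = fq.1})) := by
          intro x x' hxx
          apply Subtype.ext
          exact congrArg (fun z : (Σ fq : {f : Fin (m + 1) → G ⧸ C // commElt f = (1 : G ⧸ C)},
            {y : Fin (m + 1) → G // π ∘ y = fq.1}) => (z.2 : Fin (m + 1) → G)) hxx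
        have hfib : ∀ fq : {f : Fin (m + 1) → G ⧸ C // commElt f = (1 : G ⧸ C)},
            Nat.card {y : Fin (m + 1) → G // π ∘ y = fq.1} ≤ cC ^ (m + 1) := by
          intro fq
          have hsurj : ∀ q : G ⧸ C, ∃ y : G, π y = q := fun q => QuotientGroup.mk'_surjective C q
          choose rep hrep using hsurj
          have hmemC : ∀ (y : {y : Fin (m + 1) → G // π ∘ y = fq.1}) (i : Fin (m + 1)),
              (rep (fq.1 i))⁻¹ * y.1 i ∈ C := by
            intro y i
            have hyi : π (y.1 i) = fq.1 i := congrFun y.2 i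
            have : π ((rep (fq.1 i))⁻¹ * y.1 i) = 1 := by
              rw [map_mul, map_inv, hyi, hrep, inv_mul_cancel]
            exact (QuotientGroup.eq_one_iff _).mp this
          have hiy : Function.Injective (fun y : {y : Fin (m + 1) → G // π ∘ y = fq.1} =>
              (fun i => (⟨(rep (fq.1 i))⁻¹ * y.1 i, hmemC y i⟩ : C)) : _ → (Fin (m + 1) → C)) := by
            intro y y' hyy
            apply Subtype.ext
            funext i
            have := congrFun hyy i
            simp only [Subtype.mk.injEq] at this
            exact mul_left_cancel this
          calc Nat.card {y : Fin (m + 1) → G // π ∘ y = fq.1}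
              ≤ Nat.card (Fin (m + 1) → C) := Nat.card_le_card_of_injective _ hiy
          _ = cC ^ (m + 1) := by
              rw [Nat.card_fun, Nat.card_eq_fintype_card (α := Fin (m + 1)), Fintype.card_fin]
        calc Bs.card = Nat.card {x : Fin (m + 1) → G // x ∈ Bs} := hBsub
        _ ≤ Nat.card (Σ fq : {f : Fin (m + 1) → G ⧸ C // commElt f = (1 : G ⧸ C)},
              {y : Fin (m + 1) → G // π ∘ y = fq.1}) := Nat.card_le_card_of_injective _ hinj2
        _ = ∑ fq : {f : Fin (m + 1) → G ⧸ C // commElt f = (1 : G ⧸ C)},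
              Nat.card {y : Fin (m + 1) → G // π ∘ y = fq.1} := by
            rw [Nat.card_eq_fintype_card, Fintype.card_sigma]
            exact Finset.sum_congr rfl (fun x _ => Nat.card_eq_fintype_card.symm)
        _ ≤ ∑ _fq : {f : Fin (m + 1) → G ⧸ C // commElt f = (1 : G ⧸ C)}, cC ^ (m + 1) :=
            Finset.sum_le_sum (fun fq _ => hfib fq)
        _ = F * cC ^ (m + 1) := by
            rw [Finset.sum_const, Finset.card_univ, smul_eq_mul, hFdef,
              Nat.card_eq_fintype_card]
      -- real arithmetic
      have hI3 : ((m : ℝ) + 2) < ε * ((n : ℝ) + 1) := by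
        have hlt := Nat.lt_floor_add_one (((m + 1 + 1 : ℕ) : ℝ) / ε)
        rw [← hn, div_lt_iff₀ hε] at hlt
        push_cast at hlt ⊢
        nlinarith [hlt]
      have hXpos : (0 : ℝ) < (cG : ℝ) ^ (m + 1) := by positivity
      have hcGR : (0 : ℝ) < (cG : ℝ) := by exact_mod_cast hcGpos
      have hn1pos : (0 : ℝ) < (n : ℝ) + 1 := by positivity
      have h2R : ((n : ℝ) + 1) * A ≤ ((n : ℝ) + 1) * (Bs.card * cG) + (cG : ℝ) ^ (m + 2) := by
        exact_mod_cast h2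
      have hpow : (cG : ℝ) ^ (m + 2) = (cG : ℝ) ^ (m + 1) * cG := by ring
      have hT1 : ((n : ℝ) + 1) * ε * (cG : ℝ) ^ (m + 1) ≤ ((n : ℝ) + 1) * Bs.card
          + (cG : ℝ) ^ (m + 1) := by
        have hc : (((n : ℝ) + 1) * ε * (cG : ℝ) ^ (m + 1)) * cG
            ≤ (((n : ℝ) + 1) * Bs.card + (cG : ℝ) ^ (m + 1)) * cG := by
          have step := mul_le_mul_of_nonneg_left h1 (le_of_lt hn1pos)
          rw [hpow] at h2R
          ring_nf at step h2R ⊢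
          linarith [step, h2R]
        exact le_of_mul_le_mul_right hc hcGR
      have key : ((n : ℝ) + 1) * (((m : ℝ) + 1) * ε * (cG : ℝ) ^ (m + 1))
          < ((n : ℝ) + 1) * (((m : ℝ) + 2) * Bs.card) := by
        have f1 := mul_le_mul_of_nonneg_left hT1 (show (0 : ℝ) ≤ (m : ℝ) + 2 by positivity)
        have f2 := mul_lt_mul_of_pos_right hI3 hXpos
        ring_nf at f1 f2 ⊢
        linarith [f1, f2]
      have key2 : ((m : ℝ) + 1) * ε * (cG : ℝ) ^ (m + 1) < ((m : ℝ) + 2) * Bs.card :=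
        lt_of_mul_lt_mul_left key (le_of_lt hn1pos)
      have hb : ε' * (cG : ℝ) ^ (m + 1) < (Bs.card : ℝ) := by
        rw [hε'def, div_mul_eq_mul_div, div_lt_iff₀ (by positivity : (0:ℝ) < (m : ℝ) + 2)]
        ring_nf at key2 ⊢
        linarith [key2]
      have hbF : (Bs.card : ℝ) ≤ (F : ℝ) * (cC : ℝ) ^ (m + 1) := by exact_mod_cast h3
      have hXsplit : (cG : ℝ) ^ (m + 1) = (cQ : ℝ) ^ (m + 1) * (cC : ℝ) ^ (m + 1) := by
        rw [hGQC]
        push_cast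
        ring
      have hFq : ε' * (cQ : ℝ) ^ (m + 1) < (F : ℝ) := by
        have h4 : (ε' * (cQ : ℝ) ^ (m + 1)) * (cC : ℝ) ^ (m + 1)
            < (F : ℝ) * (cC : ℝ) ^ (m + 1) := by
          rw [hXsplit] at hb
          calc (ε' * (cQ : ℝ) ^ (m + 1)) * (cC : ℝ) ^ (m + 1)
              = ε' * ((cQ : ℝ) ^ (m + 1) * (cC : ℝ) ^ (m + 1)) := by ring
          _ < (Bs.card : ℝ) := hb
          _ ≤ (F : ℝ) * (cC : ℝ) ^ (m + 1) := hbF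
        exact lt_of_mul_lt_mul_right h4 (by positivity)
      have hFeq : Nat.card {f : Fin (m + 1) → G ⧸ C // FreeGroup.lift f (commWord (m + 1))
          = (1 : G ⧸ C)} = F :=
        Nat.card_congr (Equiv.subtypeEquivRight (fun f => by rw [lift_commWord]))
      simp only [wordProb]
      rw [hFeq, le_div_iff₀ (by exact_mod_cast pow_pos (show (0:ℝ) < (cQ : ℝ) by exact_mod_cast hcQpos) (m+1))]
      exact le_of_lt hFq
    have hIH := ih (G ⧸ C) ε' hε'pos 1 h' n (by rw [hn, harith])
    set M := kerInt (G ⧸ C) (Equiv.Perm (Fin n)) with hMdef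
    have hmem : ∀ a : ↥N, π (a : G) ∈ M := by
      intro a
      rw [hMdef, kerInt, Subgroup.mem_iInf]
      intro φ
      have ha : (a : G) ∈ kerInt G (Equiv.Perm (Fin n)) := a.2
      rw [kerInt, Subgroup.mem_iInf] at ha
      simpa using ha (φ.comp π)
    set ρ : ↥N →* ↥M := ((π.comp N.subtype).codRestrict M (fun a => hmem a)) with hρdef
    have hmap := Subgroup.lowerCentralSeries.map ρ m
    rw [hIH] at hmap
    have hker : ∀ c ∈ Subgroup.lowerCentralSeries (⊤ : Subgroup ↥N) m, ((c : G) ∈ C) := by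
      intro c hc
      have hbot : ρ c ∈ (⊥ : Subgroup ↥M) := hmap (Subgroup.mem_map.mpr ⟨c, hc, rfl⟩)
      rw [Subgroup.mem_bot] at hbot
      have h1 : π (c : G) = 1 := congrArg Subtype.val hbot
      rw [hπdef, QuotientGroup.mk'_apply, QuotientGroup.eq_one_iff] at h1
      exact h1
    rw [Subgroup.lowerCentralSeries_succ]
    show ⁅Subgroup.lowerCentralSeries (⊤ : Subgroup ↥N) m, (⊤ : Subgroup ↥N)⁆ = ⊥
    rw [Subgroup.commutator_eq_bot_iff_le_centralizer]
    intro c hc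
    rw [Subgroup.mem_centralizer_iff]
    intro a _
    have hcomm := Subgroup.mem_centralizer_iff.mp (hker c hc) (a : G) a.2
    exact Subtype.ext hcomm

/-- If a finite group `G` satisfies `P_{G,w_k}(g) ≥ ε` for some `g`,
then `N = G(S_n)` with `n = ⌊k/ε⌋` is nilpotent of class less than `k`. -/
theorem stmt3 (k : ℕ) (hk : 1 ≤ k) (ε : ℝ) (hε : 0 < ε)
    (G : Type*) [Group G] [Finite G] (g : G) (h : ε ≤ wordProb (commWord k) g)
    (n : ℕ) (hn : n = Nat.floor ((k : ℝ) / ε)) :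
    Subgroup.lowerCentralSeries (⊤ : Subgroup ↥(kerInt G (Equiv.Perm (Fin n)))) (k - 1) = ⊥ := by
  obtain ⟨m, rfl⟩ : ∃ m, k = m + 1 := ⟨k - 1, (Nat.succ_pred_eq_of_pos hk).symm⟩
  show Subgroup.lowerCentralSeries (⊤ : Subgroup ↥(kerInt G (Equiv.Perm (Fin n)))) (m + 1 - 1) = ⊥
  rw [Nat.add_sub_cancel]
  exact main m G ε hε g h n hn
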